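/- Let r ≥ 1 be an integer and let G = (V,E) be a connected finite simple graph with |V| > r. Then there exists a vertex set U ⊆ V such that every connected component of the subgraph of G induced on V \ U has exactly r vertices, there is at least one such component, and for every vertex v ∈ V there exists a connected component C of the induced subgraph on V \ U with dist_G(v, C) ≤ r. -/

import Mathlib

open SimpleGraph

variable {V : Type*}

/-- `C` is a connected component of the subgraph of `G` induced on `W`:
a maximal nonempty subset of `W` inducing a connected subgraph. -/
def IsCompOf (G : SimpleGraph V) (W : Set V) (C : Set V) : Prop :=
  C ⊆ W ∧ C.Nonempty ∧ (G.induce C).Connected ∧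
    ∀ D : Set V, C ⊆ D → D ⊆ W → (G.induce D).Connected → D = C

section Aux

variable {G : SimpleGraph V}

lemma induce_singleton_connected (G : SimpleGraph V) (v : V) :
    (G.induce {v}).Connected := by
  rw [connected_iff_exists_forall_reachable]
  refine ⟨⟨v, rfl⟩, ?_⟩
  rintro ⟨w, hw⟩
  have : w = v := hw
  subst this
  exact Reachable.refl _

lemma exists_boundary_adj {S : Set V} {x y : V} (p : G.Walk x y)
    (hx : x ∈ S) (hy : y ∉ S) : ∃ u ∈ S, ∃ w, w ∉ S ∧ G.Adj u w := by
  induction p with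
  | nil => exact absurd hx hy
  | @cons a b c h p ih =>
    by_cases hb : b ∈ S
    · exact ih hb hy
    · exact ⟨a, hx, b, hb, h⟩

lemma adj_edist_le {u w : V} (h : G.Adj u w) : G.edist u w ≤ 1 :=
  le_of_eq (edist_eq_one_iff_adj.mpr h)

/-- Growing a connected set of any size `k ≤ |V|` around a vertex, staying within
distance `k-1`. -/
lemma grow [Fintype V] (hG : G.Connected) (v : V) :
    ∀ k : ℕ, 1 ≤ k → k ≤ Fintype.card V →
      ∃ S : Set V, v ∈ S ∧ S.ncard = k ∧ (G.induce S).Connected ∧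
        ∀ u ∈ S, G.edist v u ≤ ((k - 1 : ℕ) : ℕ∞) := by
  intro k hk
  induction k, hk using Nat.le_induction with
  | base =>
    intro _
    refine ⟨{v}, rfl, by simp, induce_singleton_connected G v, ?_⟩
    rintro u hu
    have : u = v := hu
    subst this
    simp [edist_self]
  | succ k hk ih =>
    intro hcard
    obtain ⟨S, hvS, hScard, hSconn, hSdist⟩ := ih (le_trans (Nat.le_succ k) hcard)
    obtain ⟨y, hy⟩ : ∃ y, y ∉ S := by
      by_contra h
      push_neg at h
      have huniv : S = Set.univ := Set.eq_univ_of_forall h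
      rw [huniv, Set.ncard_univ, Nat.card_eq_fintype_card] at hScard
      omega
    obtain ⟨p⟩ := hG v y
    obtain ⟨u, huS, w, hwS, huw⟩ := exists_boundary_adj p hvS hy
    refine ⟨insert w S, Set.mem_insert_of_mem _ hvS, ?_, ?_, ?_⟩
    · rw [Set.ncard_insert_of_notMem hwS S.toFinite, hScard]
    · have : insert w S = S ∪ {w} := by
        rw [Set.union_singleton]
      rw [this]
      exact connected_induce_union hSconn.preconnected (induce_singleton_connected G w).preconnected huS rfl huw
    · rintro z hz
      rcases hz with rfl | hzS
      · calc G.edist v z ≤ G.edist v u + G.edist u z := G.edist_triangle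
          _ ≤ ((k - 1 : ℕ) : ℕ∞) + 1 := add_le_add (hSdist u huS) (adj_edist_le huw)
          _ = ((k + 1 - 1 : ℕ) : ℕ∞) := by
              have h1 : k + 1 - 1 = (k - 1) + 1 := by omega
              rw [h1, Nat.cast_add, Nat.cast_one]
      · exact le_trans (hSdist z hzS) (by
          apply Nat.cast_le.mpr
          omega)

/-- A family of sets is *good* if each member induces a connected subgraph of
cardinality `r`, and distinct members are disjoint and non-adjacent. -/
def GoodFam (G : SimpleGraph V) (r : ℕ) (𝓕 : Set (Set V)) : Prop :=
  (∀ C ∈ 𝓕, C.ncard = r ∧ (G.induce C).Connected) ∧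
    (∀ C ∈ 𝓕, ∀ C' ∈ 𝓕, C ≠ C' → ∀ u ∈ C, ∀ w ∈ C', ¬ G.Adj u w ∧ u ≠ w)

lemma walk_stays {𝓕 : Set (Set V)} {D : Set V}
    (hDsub : D ⊆ ⋃₀ 𝓕)
    (hsep : ∀ C ∈ 𝓕, ∀ C' ∈ 𝓕, C ≠ C' → ∀ u ∈ C, ∀ w ∈ C', ¬ G.Adj u w ∧ u ≠ w)
    {C : Set V} (hC : C ∈ 𝓕) :
    ∀ {a b : D}, (G.induce D).Walk a b → (a : V) ∈ C → (b : V) ∈ C := by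
  intro a b p
  induction p with
  | nil => exact id
  | @cons a b c h p ih =>
    intro haC
    apply ih
    have hGadj : G.Adj (a : V) (b : V) := h
    obtain ⟨C', hC', hbC'⟩ := hDsub b.2
    by_cases hCC' : C = C'
    · exact hCC' ▸ hbC'
    · exact absurd hGadj (hsep C hC C' hC' hCC' a haC b hbC').1

end Aux

theorem stmt12 [Fintype V] (G : SimpleGraph V) (hG : G.Connected) (r : ℕ) (hr : 1 ≤ r)
    (hcard : r < Fintype.card V) :
    ∃ U : Set V,
      (∀ C : Set V, IsCompOf G Uᶜ C → C.ncard = r) ∧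
      (∃ C : Set V, IsCompOf G Uᶜ C) ∧
      (∀ v : V, ∃ C : Set V, IsCompOf G Uᶜ C ∧ ∃ u ∈ C, G.edist v u ≤ (r : ℕ∞)) := by
  classical
  -- pick a good family maximizing the size of its union
  obtain ⟨𝓕, h𝓕good, h𝓕max⟩ :=
    Set.Finite.exists_maximalFor (fun 𝓕 : Set (Set V) => (⋃₀ 𝓕).ncard)
      {𝓕 | GoodFam G r 𝓕} (Set.toFinite _) ⟨∅, by simp [GoodFam]⟩
  simp only [Set.mem_setOf_eq] at h𝓕good h𝓕max
  -- any addable set is already a member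
  have haddable : ∀ S : Set V, S.ncard = r → (G.induce S).Connected →
      (∀ C ∈ 𝓕, ∀ u ∈ S, ∀ w ∈ C, ¬ G.Adj u w ∧ u ≠ w) → S ∈ 𝓕 := by
    intro S hScard hSconn hSsep
    by_contra hS𝓕
    have hgood' : GoodFam G r (insert S 𝓕) := by
      constructor
      · rintro C (rfl | hC)
        · exact ⟨hScard, hSconn⟩
        · exact h𝓕good.1 C hC
      · rintro C (rfl | hC) C' (rfl | hC') hne u hu w hw
        · exact absurd rfl hne
        · exact hSsep C' hC' u hu w hw
        · have := hSsep C hC w hw u hu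
          exact ⟨fun h => this.1 h.symm, fun h => this.2 h.symm⟩
        · exact h𝓕good.2 C hC C' hC' hne u hu w hw
    have hdisj : Disjoint S (⋃₀ 𝓕) := by
      rw [Set.disjoint_sUnion_right]
      intro C hC
      rw [Set.disjoint_left]
      intro u huS huC
      exact (hSsep C hC u huS u huC).2 rfl
    have hunion : ⋃₀ insert S 𝓕 = S ∪ ⋃₀ 𝓕 := Set.sUnion_insert S 𝓕
    have hlt : (⋃₀ 𝓕).ncard < (⋃₀ insert S 𝓕).ncard := by
      rw [hunion, Set.ncard_union_eq hdisj S.toFinite (Set.toFinite _)]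
      have : S.ncard = r := hScard
      omega
    have := h𝓕max hgood' (le_of_lt hlt)
    omega
  -- 𝓕 is nonempty
  have hVne : Nonempty V := by
    rw [← Fintype.card_pos_iff]
    omega
  obtain ⟨v0⟩ := hVne
  obtain ⟨S0, hv0S0, hS0card, hS0conn, _⟩ := grow hG v0 r hr (le_of_lt hcard)
  have h𝓕ne : 𝓕.Nonempty := by
    rcases Set.eq_empty_or_nonempty 𝓕 with h | h
    · subst h
      exact absurd (haddable S0 hS0card hS0conn (by simp)) (by simp)
    · exact h
  -- every member of 𝓕 is a component of the graph induced on ⋃₀ 𝓕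
  have hmem_comp : ∀ C ∈ 𝓕, IsCompOf G (⋃₀ 𝓕) C := by
    intro C hC
    refine ⟨Set.subset_sUnion_of_mem hC, ?_, (h𝓕good.1 C hC).2, ?_⟩
    · apply Set.nonempty_of_ncard_ne_zero
      have := (h𝓕good.1 C hC).1
      omega
    · intro D hCD hDsub hDconn
      apply Set.Subset.antisymm _ hCD
      intro x hxD
      obtain ⟨c, hc⟩ : C.Nonempty := by
        apply Set.nonempty_of_ncard_ne_zero
        have := (h𝓕good.1 C hC).1
        omega
      obtain ⟨p⟩ := hDconn ⟨c, hCD hc⟩ ⟨x, hxD⟩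
      exact walk_stays hDsub h𝓕good.2 hC p hc
  -- every component of the graph induced on ⋃₀ 𝓕 is a member of 𝓕
  have hcomp_mem : ∀ D : Set V, IsCompOf G (⋃₀ 𝓕) D → D ∈ 𝓕 := by
    intro D ⟨hDsub, ⟨x, hxD⟩, hDconn, hDmax⟩
    obtain ⟨C, hC, hxC⟩ := hDsub hxD
    have hDC : D ⊆ C := by
      intro y hyD
      obtain ⟨p⟩ := hDconn ⟨x, hxD⟩ ⟨y, hyD⟩
      exact walk_stays hDsub h𝓕good.2 hC p hxC
    have : C = D := hDmax C hDC (Set.subset_sUnion_of_mem hC) (h𝓕good.1 C hC).2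
    exact this ▸ hC
  refine ⟨(⋃₀ 𝓕)ᶜ, ?_, ?_, ?_⟩ <;> rw [compl_compl]
  · intro C hC
    exact (h𝓕good.1 C (hcomp_mem C hC)).1
  · obtain ⟨C, hC⟩ := h𝓕ne
    exact ⟨C, hmem_comp C hC⟩
  · intro v
    by_contra hcon
    push_neg at hcon
    have hfar : ∀ C ∈ 𝓕, ∀ u ∈ C, (r : ℕ∞) < G.edist v u :=
      fun C hC => hcon C (hmem_comp C hC)
    obtain ⟨S, hvS, hScard, hSconn, hSdist⟩ := grow hG v r hr (le_of_lt hcard)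
    have hSsep : ∀ C ∈ 𝓕, ∀ u ∈ S, ∀ w ∈ C, ¬ G.Adj u w ∧ u ≠ w := by
      intro C hC u hu w hw
      have hdu := hSdist u hu
      constructor
      · intro hadj
        apply absurd (hfar C hC w hw)
        apply not_lt_of_ge
        calc G.edist v w ≤ G.edist v u + G.edist u w := G.edist_triangle
          _ ≤ ((r - 1 : ℕ) : ℕ∞) + 1 := add_le_add hdu (adj_edist_le hadj)
          _ = (r : ℕ∞) := by
              have h1 : r = (r - 1) + 1 := by omega
              conv_rhs => rw [h1]
              rw [Nat.cast_add, Nat.cast_one]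
      · rintro rfl
        apply absurd (hfar C hC u hw)
        apply not_lt_of_ge
        exact le_trans hdu (Nat.cast_le.mpr (by omega))
    have hS𝓕 : S ∈ 𝓕 := haddable S hScard hSconn hSsep
    have := hfar S hS𝓕 v hvS
    rw [SimpleGraph.edist_self] at this
    simp at this
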